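/- The degree of the Grassmannian G(d,n) under the Plücker embedding, given by deg G(d,n) = (d(n−d))! · ∏_{i=0}^{d−1} i!/(n−d+i)!, is a positive integer for all 0 < d < n. -/

import Mathlib

open Nat Finset

private lemma aux_L0 (q s : ℕ) (hq : 0 < q) (hs : s < q) :
    ∀ r, r ≤ q → ∑ i ∈ range r, (s + i) / q = s + r - q := by
  intro r
  induction r with
  | zero => intro _; simp; omega
  | succ r ih =>
    intro hr
    rw [Finset.sum_range_succ, ih (by omega)]
    rcases lt_or_ge (s + r) q with h | h
    · rw [Nat.div_eq_of_lt h]; omega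
    · rw [Nat.div_eq_sub_div hq h, Nat.div_eq_of_lt (by omega)]; omega

private lemma aux_L1 (q s r : ℕ) (hq : 0 < q) (hs : s < q) (hr : r < q) :
    s + r - q ≤ s * r / q := by
  rw [Nat.le_div_iff_mul_le hq]
  rcases le_or_gt (s + r) q with h | h
  · simp [Nat.sub_eq_zero_of_le h]
  · obtain ⟨t, ht⟩ : ∃ t, s + r = q + t := ⟨s + r - q, by omega⟩
    obtain ⟨u, hu⟩ : ∃ u, s + u = q := ⟨q - s, by omega⟩
    obtain ⟨v, hv⟩ : ∃ v, r + v = q := ⟨q - r, by omega⟩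
    have hst : s + r - q = t := by omega
    rw [hst]
    zify at *
    nlinarith [mul_nonneg (by omega : (0:ℤ) ≤ u) (by omega : (0:ℤ) ≤ v)]

private lemma aux_L2 (q d r : ℕ) (hq : 0 < q) (hr : r < q) :
    ∑ i ∈ range r, (d + i) / q ≤ d * r / q := by
  obtain ⟨b, s, hd, hs⟩ : ∃ b s, d = q * b + s ∧ s < q :=
    ⟨d / q, d % q, (Nat.div_add_mod d q).symm, Nat.mod_lt _ hq⟩
  have h1 : ∀ i, (d + i) / q = b + (s + i) / q := fun i => by
    rw [show d + i = q * b + (s + i) by omega, Nat.mul_add_div hq]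
  have h2 : d * r / q = r * b + s * r / q := by
    rw [show d * r = q * (r * b) + s * r by rw [hd]; ring, Nat.mul_add_div hq]
  simp only [h1, Finset.sum_add_distrib, Finset.sum_const, Finset.card_range, smul_eq_mul, h2]
  have := aux_L0 q s hq hs r (le_of_lt hr)
  have := aux_L1 q s r hq hs hr
  omega

private lemma aux_L3 (q d m : ℕ) (hq : 0 < q) :
    ∑ i ∈ range d, (m + i) / q ≤ d * m / q + ∑ i ∈ range d, i / q := by
  obtain ⟨a, r, hm, hr⟩ : ∃ a r, m = q * a + r ∧ r < q :=
    ⟨m / q, m % q, (Nat.div_add_mod m q).symm, Nat.mod_lt _ hq⟩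
  have h1 : ∀ i, (m + i) / q = a + (r + i) / q := fun i => by
    rw [show m + i = q * a + (r + i) by omega, Nat.mul_add_div hq]
  have h2 : d * m / q = d * a + d * r / q := by
    rw [show d * m = q * (d * a) + d * r by rw [hm]; ring, Nat.mul_add_div hq]
  have h3 : ∑ j ∈ range (r + d), j / q = ∑ i ∈ range d, (r + i) / q := by
    rw [Finset.sum_range_add]
    have : ∑ j ∈ range r, j / q = 0 :=
      Finset.sum_eq_zero fun j hj => Nat.div_eq_of_lt (lt_trans (Finset.mem_range.mp hj) hr)
    rw [this, zero_add]
  have h4 : ∑ j ∈ range (d + r), j / q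
      = ∑ j ∈ range d, j / q + ∑ i ∈ range r, (d + i) / q := Finset.sum_range_add _ _ _
  have h5 : ∑ i ∈ range r, (d + i) / q ≤ d * r / q := aux_L2 q d r hq hr
  simp only [h1, Finset.sum_add_distrib, Finset.sum_const, Finset.card_range, smul_eq_mul, h2]
  rw [← h3, show r + d = d + r by omega, h4]
  omega

private lemma aux_dvd (d m : ℕ) (hd : 0 < d) (hm : 0 < m) :
    (∏ i ∈ range d, (m + i).factorial) ∣ (d * m).factorial * ∏ i ∈ range d, i.factorial := by
  have hB : (∏ i ∈ range d, (m + i).factorial) ≠ 0 :=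
    (Finset.prod_pos fun i _ => factorial_pos _).ne'
  have hA : (d * m).factorial * ∏ i ∈ range d, i.factorial ≠ 0 :=
    (Nat.mul_pos (factorial_pos _) (Finset.prod_pos fun i _ => factorial_pos _)).ne'
  rw [← Nat.factorization_le_iff_dvd hB hA, Finsupp.le_def]
  intro p
  by_cases hp : p.Prime
  · haveI : Fact p.Prime := ⟨hp⟩
    have hple : ∀ i ∈ range d, m + i ≤ d * m := by
      intro i hi
      have hi' : i < d := Finset.mem_range.mp hi
      nlinarith
    set b := Nat.log p (d * m) + 1 with hb
    have hleg : ∀ x : ℕ, x ≤ d * m →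
        (x.factorial).factorization p = ∑ k ∈ Finset.Ico 1 b, x / p ^ k := by
      intro x hx
      rw [Nat.factorization_def _ hp]
      exact padicValNat_factorial (lt_of_le_of_lt (Nat.log_mono_right hx) (by omega))
    rw [Nat.factorization_mul (factorial_pos _).ne'
        (Finset.prod_pos fun i _ => factorial_pos _).ne',
      Nat.factorization_prod (fun i _ => (factorial_pos _).ne'),
      Nat.factorization_prod (fun i _ => (factorial_pos _).ne')]
    simp only [Finsupp.add_apply, Finsupp.finset_sum_apply]
    have e1 : ∀ i ∈ range d, ((m + i).factorial).factorization p
        = ∑ k ∈ Finset.Ico 1 b, (m + i) / p ^ k := fun i hi => hleg _ (hple i hi)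
    have e2 : ∀ i ∈ range d, (i.factorial).factorization p
        = ∑ k ∈ Finset.Ico 1 b, i / p ^ k := by
      intro i hi
      have : i ≤ d * m := le_trans (le_of_lt (Finset.mem_range.mp hi))
        (le_trans (Nat.le_mul_of_pos_right d hm) (le_refl _))
      exact hleg _ this
    rw [Finset.sum_congr rfl e1, Finset.sum_congr rfl e2, hleg _ (le_refl _)]
    rw [Finset.sum_comm (s := range d), Finset.sum_comm (s := range d), ← Finset.sum_add_distrib]
    refine Finset.sum_le_sum fun k _ => ?_
    exact aux_L3 (p ^ k) d m (Nat.pow_pos hp.pos)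
  · simp [Nat.factorization_eq_zero_of_not_prime _ hp]

private lemma aux_main (d m : ℕ) (hd : 0 < d) (hm : 0 < m) :
    ∃ k : ℕ, 0 < k ∧
      (((d * m).factorial : ℚ) *
        ∏ i ∈ Finset.range d, (i.factorial : ℚ) / ((m + i).factorial : ℚ)) = (k : ℚ) := by
  obtain ⟨k, hk⟩ := aux_dvd d m hd hm
  have hB : 0 < ∏ i ∈ range d, (m + i).factorial := Finset.prod_pos fun i _ => factorial_pos _
  have hA : 0 < (d * m).factorial * ∏ i ∈ range d, i.factorial :=
    Nat.mul_pos (factorial_pos _) (Finset.prod_pos fun i _ => factorial_pos _)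
  have hk0 : 0 < k := by
    rcases Nat.eq_zero_or_pos k with h | h
    · rw [h, mul_zero] at hk; omega
    · exact h
  refine ⟨k, hk0, ?_⟩
  have hBQ : (∏ i ∈ range d, ((m + i).factorial : ℚ)) ≠ 0 :=
    Finset.prod_ne_zero_iff.mpr fun i _ => by exact_mod_cast (factorial_pos (m + i)).ne'
  rw [Finset.prod_div_distrib, ← mul_div_assoc, div_eq_iff hBQ]
  have key := congrArg (fun x : ℕ => (x : ℚ)) hk
  push_cast at key
  linear_combination key

theorem stmt_2 (d n : ℕ) (hd : 0 < d) (hn : d < n) :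
    ∃ k : ℕ, 0 < k ∧
      (((d * (n - d)).factorial : ℚ) *
        ∏ i ∈ Finset.range d, (i.factorial : ℚ) / ((n - d + i).factorial : ℚ)) = (k : ℚ) := by
  exact aux_main d (n - d) hd (by omega)
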